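/- Let J be a strongly stable monomial ideal in A[x₀,…,xₙ] over a commutative noetherian ring A, let m be the maximum degree of monomials in the minimal generating set B_J, let F_J be a J-marked set and I = (F_J). The following are equivalent: (a) F_J is a J-marked basis; (b) I_s = ⟨F_J^{(s)}⟩ as A-modules for every s ≤ m+1; (c) (I ∩ ⟨N(J)⟩)_s = 0 for every s ≤ m+1. -/

import Mathlib

open MvPolynomial

noncomputable section

/-- Exponent vectors of monomials in the variables `x₀, …, xₙ`. -/
abbrev Mon (n : ℕ) : Type := Fin (n + 1) →₀ ℕ

namespace MarkedFamilies

variable {n : ℕ}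

/-- The total degree of a monomial given by its exponent vector. -/
def mdeg (α : Mon n) : ℕ := α.sum fun _ e => e

/-- A monomial ideal, identified with its (upward closed) set of monomials. -/
def IsMonomialIdeal (J : Set (Mon n)) : Prop := ∀ α ∈ J, ∀ δ : Mon n, α + δ ∈ J

/-- A strongly stable monomial ideal: a monomial ideal such that for every monomial
`x^α ∈ J`, every variable `x_j` dividing `x^α` and every `i > j`, `(x_i/x_j)·x^α ∈ J`. -/
def IsStronglyStable (J : Set (Mon n)) : Prop :=
  IsMonomialIdeal J ∧
    ∀ α ∈ J, ∀ j : Fin (n + 1), α j ≠ 0 → ∀ i : Fin (n + 1), j < i →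
      α - Finsupp.single j 1 + Finsupp.single i 1 ∈ J

/-- The minimal monomial generators `B_J` of a monomial ideal `J`. -/
def minGens (J : Set (Mon n)) : Set (Mon n) :=
  {α | α ∈ J ∧ ∀ j : Fin (n + 1), α j ≠ 0 → α - Finsupp.single j 1 ∉ J}

/-- `min x^γ ≥ max x^δ`: every variable dividing `x^γ` is at least every variable
dividing `x^δ` (vacuously true when either monomial is `1`). -/
def minGeMax (γ δ : Mon n) : Prop := ∀ i ∈ γ.support, ∀ j ∈ δ.support, j ≤ i

/-- Lexicographic order induced by `x₀ < ⋯ < xₙ`: `a <ₗₑₓ b` iff at the largest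
index where they differ, `a` has the smaller exponent. -/
def lexLt (a b : Mon n) : Prop :=
  ∃ i : Fin (n + 1), a i < b i ∧ ∀ j : Fin (n + 1), i < j → a j = b j

/-- A saturated strongly stable ideal: strongly stable and no minimal generator is
divisible by `x₀`. -/
def IsSaturatedSS (J : Set (Mon n)) : Prop :=
  IsStronglyStable J ∧ ∀ α ∈ minGens J, α 0 = 0

/-- The truncation `J_{≥ t}`: the (monomial) ideal generated by the monomials of `J`
of degree at least `t`. -/
def truncSet (J : Set (Mon n)) (t : ℕ) : Set (Mon n) := {α | α ∈ J ∧ t ≤ mdeg α}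

section Ring

variable (A : Type*) [CommRing A]

/-- `⟨N(J)⟩`: the `A`-span of the monomials not in `J`. -/
def nSpan (J : Set (Mon n)) : Submodule A (MvPolynomial (Fin (n + 1)) A) :=
  Submodule.span A {p | ∃ β : Mon n, β ∉ J ∧ p = monomial β (1 : A)}

/-- `⟨N(J)_s⟩`: the `A`-span of the monomials of degree `s` not in `J`. -/
def nSpanDeg (J : Set (Mon n)) (s : ℕ) : Submodule A (MvPolynomial (Fin (n + 1)) A) :=
  Submodule.span A {p | ∃ β : Mon n, β ∉ J ∧ mdeg β = s ∧ p = monomial β (1 : A)}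

/-- `I_s`: the degree-`s` homogeneous component of an ideal, as an `A`-submodule. -/
def idealDeg (I : Ideal (MvPolynomial (Fin (n + 1)) A)) (s : ℕ) :
    Submodule A (MvPolynomial (Fin (n + 1)) A) :=
  Submodule.restrictScalars A I ⊓ homogeneousSubmodule (Fin (n + 1)) A s

/-- `I_{≥ s}`: the ideal `⊕_{t ≥ s} I_t`, i.e. the ideal generated by the homogeneous
elements of `I` of degree at least `s`. -/
def idealGeq (I : Ideal (MvPolynomial (Fin (n + 1)) A)) (s : ℕ) :
    Ideal (MvPolynomial (Fin (n + 1)) A) :=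
  Ideal.span {f | f ∈ I ∧ ∃ t : ℕ, s ≤ t ∧ f.IsHomogeneous t}

/-- A homogeneous ideal of the polynomial ring. -/
def IsHomogIdeal (I : Ideal (MvPolynomial (Fin (n + 1)) A)) : Prop :=
  ∀ f ∈ I, ∀ s : ℕ, homogeneousComponent s f ∈ I

variable {A}

/-- A `J`-marked set: a family assigning to each minimal generator `x^α ∈ B_J` a
polynomial `f_α = x^α − Σ_{x^β ∈ N(J)_{|α|}} c_{αβ} x^β`. -/
def IsMarkedSet (J : Set (Mon n)) (F : Mon n → MvPolynomial (Fin (n + 1)) A) : Prop :=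
  ∀ α ∈ minGens J, (F α).coeff α = 1 ∧
    ∀ β ∈ (F α).support, β ≠ α → β ∉ J ∧ mdeg β = mdeg α

/-- The ideal generated by a marked set. -/
def markedIdeal (J : Set (Mon n)) (F : Mon n → MvPolynomial (Fin (n + 1)) A) :
    Ideal (MvPolynomial (Fin (n + 1)) A) :=
  Ideal.span (F '' minGens J)

/-- A `J`-marked basis: a `J`-marked set `F` with `A[x] = (F) ⊕ ⟨N(J)⟩` as `A`-modules. -/
def IsMarkedBasis (J : Set (Mon n)) (F : Mon n → MvPolynomial (Fin (n + 1)) A) : Prop :=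
  IsMarkedSet J F ∧
    IsCompl (Submodule.restrictScalars A (markedIdeal J F)) (nSpan A J)

/-- `F_J^{(s)} = { x^δ f_α : deg(x^δ f_α) = s, min x^α ≥ max x^δ }`. -/
def FSet (J : Set (Mon n)) (F : Mon n → MvPolynomial (Fin (n + 1)) A) (s : ℕ) :
    Set (MvPolynomial (Fin (n + 1)) A) :=
  {p | ∃ α δ : Mon n, α ∈ minGens J ∧ mdeg α + mdeg δ = s ∧ minGeMax α δ ∧
        p = monomial δ (1 : A) * F α}

/-- `F̂_J^{(s)} = { x^δ f_α : deg(x^δ f_α) = s, min x^α < max x^δ }`. -/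
def FHatSet (J : Set (Mon n)) (F : Mon n → MvPolynomial (Fin (n + 1)) A) (s : ℕ) :
    Set (MvPolynomial (Fin (n + 1)) A) :=
  {p | ∃ α δ : Mon n, α ∈ minGens J ∧ mdeg α + mdeg δ = s ∧ ¬ minGeMax α δ ∧
        p = monomial δ (1 : A) * F α}

/-- `SF_J^{(s)} = { x^δ f_β − x^γ f_α : x^δ f_β ∈ F̂_J^{(s)}, x^γ f_α ∈ F_J^{(s)},
x^δ x^β = x^γ x^α }`. -/
def SFSet (J : Set (Mon n)) (F : Mon n → MvPolynomial (Fin (n + 1)) A) (s : ℕ) :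
    Set (MvPolynomial (Fin (n + 1)) A) :=
  {p | ∃ α γ β δ : Mon n, α ∈ minGens J ∧ β ∈ minGens J ∧
      mdeg β + mdeg δ = s ∧ ¬ minGeMax β δ ∧
      mdeg α + mdeg γ = s ∧ minGeMax α γ ∧
      δ + β = γ + α ∧ p = monomial δ (1 : A) * F β - monomial γ (1 : A) * F α}

/-- A `(J_s)`-marked set: one marked polynomial `f̃_γ = x^γ − Σ_{x^δ ∈ N(J)_s} d_{γδ} x^δ`
for each monomial `x^γ` of degree `s` in `J`. -/
def IsTruncMarkedSet (J : Set (Mon n)) (s : ℕ)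
    (f : Mon n → MvPolynomial (Fin (n + 1)) A) : Prop :=
  ∀ γ : Mon n, γ ∈ J → mdeg γ = s →
    (f γ).coeff γ = 1 ∧ ∀ β ∈ (f γ).support, β ≠ γ → β ∉ J ∧ mdeg β = s

end Ring

/-- Index set for the generic coefficients `C_{αβ}` (`x^α ∈ B_J`, `x^β ∈ N(J)_{|α|}`). -/
abbrev CIdx (J : Set (Mon n)) : Type :=
  {p : Mon n × Mon n // p.1 ∈ minGens J ∧ p.2 ∉ J ∧ mdeg p.2 = mdeg p.1}

/-- The coefficient ring `ℤ[C]`. -/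
abbrev ZC (J : Set (Mon n)) : Type := MvPolynomial (CIdx J) ℤ

/-- The generic `J`-marked set `𝓕_J = { x^α − Σ_{x^β ∈ N(J)_{|α|}} C_{αβ} x^β }`
in `ℤ[C][x]`, characterized through its coefficients. -/
def IsGenericMarkedSet (J : Set (Mon n))
    (𝓕 : Mon n → MvPolynomial (Fin (n + 1)) (ZC J)) : Prop :=
  ∀ α : Mon n, ∀ hα : α ∈ minGens J,
    (𝓕 α).coeff α = 1 ∧
    (∀ γ : Mon n, ∀ hγ : γ ∉ J ∧ mdeg γ = mdeg α,
      (𝓕 α).coeff γ = - MvPolynomial.X ⟨(α, γ), hα, hγ.1, hγ.2⟩) ∧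
    (∀ γ : Mon n, γ ≠ α → ¬(γ ∉ J ∧ mdeg γ = mdeg α) → (𝓕 α).coeff γ = 0)

/-- The ideal `𝔦_J ⊆ ℤ[C]` generated by the `x`-coefficients of all polynomials
in `(𝓕_J) ∩ ⟨N(J)⟩`. -/
def markedCoeffIdeal (J : Set (Mon n))
    (𝓕 : Mon n → MvPolynomial (Fin (n + 1)) (ZC J)) : Ideal (ZC J) :=
  Ideal.span {c : ZC J | ∃ p : MvPolynomial (Fin (n + 1)) (ZC J),
    p ∈ markedIdeal J 𝓕 ∧ p ∈ nSpan (ZC J) J ∧ ∃ γ : Mon n, p.coeff γ = c}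

/-- The evaluation homomorphism `φ_{F_J} : ℤ[C] → A`, `C_{αβ} ↦ c_{αβ}`, associated to a
`J`-marked set `F` with `f_α = x^α − Σ c_{αβ} x^β` (so `c_{αβ} = −(F α).coeff β`). -/
noncomputable def evalHom (J : Set (Mon n)) {A : Type*} [CommRing A]
    (F : Mon n → MvPolynomial (Fin (n + 1)) A) : ZC J →+* A :=
  MvPolynomial.eval₂Hom (Int.castRingHom A) fun p => -((F p.val.1).coeff p.val.2)

/-- `x^γ` is the `σ`-leading monomial of `g` (with nonzero leading coefficient). -/
def IsLeadingMon {A : Type*} [CommRing A] (σlt : Mon n → Mon n → Prop)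
    (g : MvPolynomial (Fin (n + 1)) A) (γ : Mon n) : Prop :=
  g.coeff γ ≠ 0 ∧ ∀ δ ∈ g.support, δ ≠ γ → σlt δ γ

/-- `LC(I, x^γ)`: the set of leading coefficients at `x^γ` of elements of `I`,
together with `0`. -/
def LCset {A : Type*} [CommRing A] (σlt : Mon n → Mon n → Prop)
    (I : Ideal (MvPolynomial (Fin (n + 1)) A)) (γ : Mon n) : Set A :=
  {a | ∃ g ∈ I, IsLeadingMon σlt g γ ∧ g.coeff γ = a} ∪ {0}

/-- A monic ideal with respect to the term ordering `σ`. -/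
def IsMonicIdeal {A : Type*} [CommRing A] (σlt : Mon n → Mon n → Prop)
    (I : Ideal (MvPolynomial (Fin (n + 1)) A)) : Prop :=
  ∀ γ : Mon n, LCset σlt I γ = {0} ∨ LCset σlt I γ = Set.univ

/-- The set of `σ`-leading monomials of elements of `I` (i.e. `in_σ(I)`,
identified with its set of monomials). -/
def leadingMons {A : Type*} [CommRing A] (σlt : Mon n → Mon n → Prop)
    (I : Ideal (MvPolynomial (Fin (n + 1)) A)) : Set (Mon n) :=
  {γ | ∃ g ∈ I, IsLeadingMon σlt g γ}

end MarkedFamilies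
end
noncomputable section
namespace MarkedFamilies
section AuxComb
variable {n : ℕ}

lemma mdeg_add (a b : Mon n) : mdeg (a + b) = mdeg a + mdeg b := by
  simp [mdeg, Finsupp.sum_add_index]

lemma mdeg_single (i : Fin (n + 1)) (k : ℕ) : mdeg (Finsupp.single i k) = k := by
  simp [mdeg, Finsupp.sum_single_index]

lemma mdeg_eq_zero {a : Mon n} (h : mdeg a = 0) : a = 0 := by
  ext k
  simp only [Finsupp.coe_zero, Pi.zero_apply]
  by_contra hk
  have hk' : k ∈ a.support := Finsupp.mem_support_iff.2 hk
  have : a k ≤ mdeg a := Finset.single_le_sum (fun i _ => Nat.zero_le _) hk'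
  omega

lemma sub_single_add_single {α : Mon n} {j : Fin (n + 1)} (h : α j ≠ 0) :
    α - Finsupp.single j 1 + Finsupp.single j 1 = α := by
  ext k
  rcases eq_or_ne k j with rfl | hk
  · simp only [Finsupp.add_apply, Finsupp.tsub_apply, Finsupp.single_eq_same]
    omega
  · simp [Finsupp.single_apply, (Ne.symm hk : j ≠ k)]

lemma mdeg_sub_single {α : Mon n} {j : Fin (n + 1)} (h : α j ≠ 0) :
    mdeg (α - Finsupp.single j 1) + 1 = mdeg α := by
  conv_rhs => rw [← sub_single_add_single h]
  rw [mdeg_add, mdeg_single]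

lemma support_add_eq (a b : Mon n) : (a + b).support = a.support ∪ b.support := by
  ext k
  simp only [Finsupp.mem_support_iff, Finset.mem_union, Finsupp.add_apply]
  omega

lemma support_tsub_subset (a b : Mon n) : (a - b).support ⊆ a.support := by
  intro k hk
  simp only [Finsupp.mem_support_iff, Finsupp.tsub_apply] at hk ⊢
  omega

/-! ### lex order -/

lemma lexLt_irrefl (a : Mon n) : ¬ lexLt a a := by
  rintro ⟨i, hi, -⟩; omega

lemma lexLt_trans {a b c : Mon n} (h1 : lexLt a b) (h2 : lexLt b c) : lexLt a c := by
  obtain ⟨i, hi, hia⟩ := h1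
  obtain ⟨i', hi', hia'⟩ := h2
  rcases lt_trichotomy i i' with h | rfl | h
  · exact ⟨i', by rw [hia i' h]; exact hi', fun j hj => (hia j (h.trans hj)).trans (hia' j hj)⟩
  · exact ⟨i, hi.trans hi', fun j hj => (hia j hj).trans (hia' j hj)⟩
  · exact ⟨i, by rw [← hia' i h]; exact hi, fun j hj => (hia j hj).trans (hia' j (h.trans hj))⟩

lemma lexLt_asymm {a b : Mon n} (h1 : lexLt a b) : ¬ lexLt b a :=
  fun h2 => lexLt_irrefl a (lexLt_trans h1 h2)

lemma lexLt_total {a b : Mon n} (h : a ≠ b) : lexLt a b ∨ lexLt b a := by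
  classical
  set S := (a.support ∪ b.support).filter (fun i => a i ≠ b i) with hS
  have hSne : S.Nonempty := by
    obtain ⟨k, hk⟩ : ∃ k, a k ≠ b k := by
      by_contra hc; push_neg at hc; exact h (Finsupp.ext hc)
    refine ⟨k, Finset.mem_filter.2 ⟨?_, hk⟩⟩
    simp only [Finset.mem_union, Finsupp.mem_support_iff]
    omega
  set t := S.max' hSne with ht
  have htS : t ∈ S := S.max'_mem hSne
  have htne : a t ≠ b t := (Finset.mem_filter.1 htS).2
  have hgt : ∀ j, t < j → a j = b j := by
    intro j hj
    by_contra hc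
    have hjS : j ∈ S := by
      refine Finset.mem_filter.2 ⟨?_, hc⟩
      simp only [Finset.mem_union, Finsupp.mem_support_iff]
      omega
    exact absurd (S.le_max' j hjS) (by omega)
  rcases lt_or_gt_of_ne htne with hlt | hgt'
  · exact Or.inl ⟨t, hlt, hgt⟩
  · exact Or.inr ⟨t, hgt', fun j hj => (hgt j hj).symm⟩

lemma lexLt_add_left {a b : Mon n} (c : Mon n) (h : lexLt a b) : lexLt (c + a) (c + b) := by
  obtain ⟨i, hi, hia⟩ := h
  exact ⟨i, by simp only [Finsupp.add_apply]; omega,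
    fun j hj => by simp only [Finsupp.add_apply, hia j hj]⟩

lemma lexLt_wf : WellFounded (@lexLt n) := by
  have h : ∀ a b : Mon n, lexLt a b → Finsupp.Lex (· > ·) (· < ·) a b := by
    rintro a b ⟨i, hi, hia⟩
    exact ⟨i, fun d hd => hia d hd, hi⟩
  haveI : IsTrichotomous (Fin (n + 1)) (· > ·) :=
    ⟨fun a b => by rcases lt_trichotomy a b with h | h | h
                   · exact fun _ h2 => absurd h h2
                   · exact fun _ _ => h
                   · exact fun h1 _ => absurd h h1⟩
  have hwf : WellFounded (Finsupp.Lex ((· > ·) : Fin (n+1) → Fin (n+1) → Prop)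
      ((· < ·) : ℕ → ℕ → Prop)) :=
    Finsupp.Lex.wellFounded' (fun k => Nat.not_lt_zero k) (Nat.lt_wfRel.wf)
      (wellFounded_lt)
  exact Subrelation.wf (fun {a b} hab => h a b hab) hwf

lemma lexLt_single_of_support_lt {a : Mon n} {i : Fin (n + 1)}
    (h : ∀ t ∈ a.support, t < i) : lexLt a (Finsupp.single i 1) := by
  have ha : ∀ t : Fin (n+1), i ≤ t → a t = 0 := by
    intro t hti
    by_contra hc
    exact absurd (h t (Finsupp.mem_support_iff.2 hc)) (by omega)
  refine ⟨i, ?_, ?_⟩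
  · rw [ha i le_rfl]; simp
  · intro j hj
    rw [ha j hj.le, Finsupp.single_apply, if_neg (by omega)]

end AuxComb
end MarkedFamilies
end
noncomputable section
namespace MarkedFamilies
section AuxEK
variable {n : ℕ} {J : Set (Mon n)}

lemma apply_add (a b : Mon n) (k : Fin (n + 1)) : (a + b : Mon n) k = a k + b k :=
  Finsupp.add_apply a b k

lemma apply_sub (a b : Mon n) (k : Fin (n + 1)) : (a - b : Mon n) k = a k - b k :=
  Finsupp.tsub_apply a b k

lemma single_app (j k : Fin (n + 1)) (c : ℕ) :
    (Finsupp.single j c : Mon n) k = if j = k then c else 0 :=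
  Finsupp.single_apply

/-- The Eliahou–Kervaire decomposition property: `g = a + d` with `a` a minimal
generator and `min a ≥ max d`. -/
def EKP (J : Set (Mon n)) (a d g : Mon n) : Prop :=
  a ∈ minGens J ∧ minGeMax a d ∧ g = a + d

lemma minGeMax_zero (a : Mon n) : minGeMax a 0 := by
  intro i _ j hj
  simp at hj

lemma EKP.memJ (hJ : IsMonomialIdeal J) {a d g : Mon n} (h : EKP J a d g) : g ∈ J := by
  rw [h.2.2]; exact hJ a h.1.1 d

lemma zero_mem_minGens (h : (0 : Mon n) ∈ J) : (0 : Mon n) ∈ minGens J :=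
  ⟨h, fun j hj => by simp at hj⟩

/-- Existence of the EK decomposition for strongly stable ideals. -/
lemma exists_ekp (hJ : IsStronglyStable J) : ∀ γ ∈ J, ∃ a d, EKP J a d γ := by
  suffices H : ∀ N : ℕ, ∀ γ, mdeg γ ≤ N → γ ∈ J → ∃ a d, EKP J a d γ by
    exact fun γ hγ => H (mdeg γ) γ le_rfl hγ
  intro N
  induction N with
  | zero =>
    intro γ hγd hγ
    have h0 : γ = 0 := mdeg_eq_zero (Nat.le_zero.1 hγd)
    subst h0
    exact ⟨0, 0, zero_mem_minGens hγ, minGeMax_zero _, by simp⟩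
  | succ N ih =>
    intro γ hγd hγ
    by_cases hB : γ ∈ minGens J
    · exact ⟨γ, 0, hB, minGeMax_zero _, by simp⟩
    · have hex : ∃ j, γ j ≠ 0 ∧ γ - Finsupp.single j 1 ∈ J := by
        by_contra hc
        push_neg at hc
        exact hB ⟨hγ, fun j hj => hc j hj⟩
      obtain ⟨j, hj, hjJ⟩ := hex
      have hsne : γ.support.Nonempty := ⟨j, Finsupp.mem_support_iff.2 hj⟩
      set j0 := γ.support.min' hsne with hj0
      have hj0s : j0 ∈ γ.support := γ.support.min'_mem hsne
      have hj0v : γ j0 ≠ 0 := Finsupp.mem_support_iff.1 hj0s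
      have hmin : ∀ k ∈ γ.support, j0 ≤ k := fun k hk => γ.support.min'_le k hk
      have hstrip : γ - Finsupp.single j0 1 ∈ J := by
        rcases eq_or_ne j0 j with rfl | hne
        · exact hjJ
        · have hlt : j0 < j := lt_of_le_of_ne (hmin j (Finsupp.mem_support_iff.2 hj)) hne
          have hval : (γ - Finsupp.single j 1 : Mon n) j0 ≠ 0 := by
            rw [apply_sub, single_app, if_neg hne.symm]
            omega
          have hss := hJ.2 (γ - Finsupp.single j 1) hjJ j0 hval j hlt
          have heq : γ - Finsupp.single j 1 - Finsupp.single j0 1 + Finsupp.single j 1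
              = γ - Finsupp.single j0 1 := by
            ext k
            simp only [apply_add, apply_sub, single_app]
            split_ifs <;> subst_vars <;> omega
          rwa [heq] at hss
      have hdeg : mdeg (γ - Finsupp.single j0 1) ≤ N := by
        have := mdeg_sub_single hj0v
        omega
      obtain ⟨a, d, ha, hmm, heq⟩ := ih (γ - Finsupp.single j0 1) hdeg hstrip
      refine ⟨a, d + Finsupp.single j0 1, ha, ?_, ?_⟩
      · intro i hi t ht
        rw [support_add_eq] at ht
        rcases Finset.mem_union.1 ht with ht | ht
        · exact hmm i hi t ht
        · have hts : t = j0 := by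
            by_contra hc
            simp only [Finsupp.mem_support_iff, single_app, if_neg (Ne.symm hc)] at ht
            exact ht rfl
          subst hts
          apply hmin
          have hia : i ∈ (a + d).support := by
            rw [support_add_eq]
            exact Finset.mem_union_left _ hi
          rw [← heq] at hia
          exact Finset.mem_of_subset (support_tsub_subset _ _) hia
      · have h2 : γ - Finsupp.single j0 1 + Finsupp.single j0 1 = γ := sub_single_add_single hj0v
        rw [← h2, heq, add_assoc]

lemma EKP.minGens_d_eq_zero (hJ : IsMonomialIdeal J) {γ a d : Mon n}
    (hγ : γ ∈ minGens J) (h : EKP J a d γ) : d = 0 := by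
  by_contra hd
  obtain ⟨j, hj⟩ := Finsupp.support_nonempty_iff.2 hd
  have hjv : d j ≠ 0 := Finsupp.mem_support_iff.1 hj
  have hγj : γ j ≠ 0 := by
    have := DFunLike.congr_fun h.2.2 j
    rw [apply_add] at this
    omega
  apply hγ.2 j hγj
  have heq : γ - Finsupp.single j 1 = a + (d - Finsupp.single j 1) := by
    rw [h.2.2]
    ext k
    simp only [apply_add, apply_sub, single_app]
    split_ifs <;> subst_vars <;> omega
  rw [heq]
  exact hJ a h.1.1 _

lemma EKP.strip (hJ : IsMonomialIdeal J) {γ a d : Mon n} (h : EKP J a d γ)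
    {j : Fin (n + 1)} (hj : d j ≠ 0) :
    EKP J a (d - Finsupp.single j 1) (γ - Finsupp.single j 1) := by
  refine ⟨h.1, fun i hi t ht => h.2.1 i hi t (support_tsub_subset _ _ ht), ?_⟩
  rw [h.2.2]
  ext k
  simp only [apply_add, apply_sub, single_app]
  split_ifs <;> subst_vars <;> omega

lemma EKP.min_mem_d (hJ : IsMonomialIdeal J) {γ a d : Mon n}
    (hγ : γ ∉ minGens J) (h : EKP J a d γ) (hsne : γ.support.Nonempty) :
    d (γ.support.min' hsne) ≠ 0 := by
  have hd : d ≠ 0 := by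
    rintro rfl
    exact hγ (by rw [h.2.2, add_zero] at *; exact h.1)
  set j0 := γ.support.min' hsne with hj0
  obtain ⟨jd, hjd⟩ := Finsupp.support_nonempty_iff.2 hd
  have hjdγ : jd ∈ γ.support := by
    rw [h.2.2, support_add_eq]
    exact Finset.mem_union_right _ hjd
  have h0d : j0 ≤ jd := γ.support.min'_le jd hjdγ
  by_contra hc
  have hj0γ : γ j0 ≠ 0 := Finsupp.mem_support_iff.1 (γ.support.min'_mem hsne)
  have haj0 : a j0 ≠ 0 := by
    have := DFunLike.congr_fun h.2.2 j0
    rw [apply_add] at this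
    omega
  have hj0jd := h.2.1 j0 (Finsupp.mem_support_iff.2 haj0) jd hjd
  have hj0eq : j0 = jd := le_antisymm h0d hj0jd
  rw [hj0eq] at hc
  exact (Finsupp.mem_support_iff.1 hjd) hc

/-- Uniqueness of the EK decomposition. -/
lemma ekp_unique (hJ : IsMonomialIdeal J) :
    ∀ γ a d a' d', EKP J a d γ → EKP J a' d' γ → a = a' ∧ d = d' := by
  suffices H : ∀ N : ℕ, ∀ γ a d a' d', mdeg γ ≤ N → EKP J a d γ → EKP J a' d' γ →
      a = a' ∧ d = d' by
    exact fun γ a d a' d' h1 h2 => H (mdeg γ) γ a d a' d' le_rfl h1 h2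
  intro N
  induction N with
  | zero =>
    intro γ a d a' d' hdeg h1 h2
    have hγ0 : γ = 0 := mdeg_eq_zero (Nat.le_zero.1 hdeg)
    subst hγ0
    have hmd : mdeg (0 : Mon n) = 0 := by simp [mdeg]
    have hd : d = 0 := by
      have h3 := congrArg mdeg h1.2.2
      rw [mdeg_add, hmd] at h3
      exact mdeg_eq_zero (by omega)
    have hd' : d' = 0 := by
      have h3 := congrArg mdeg h2.2.2
      rw [mdeg_add, hmd] at h3
      exact mdeg_eq_zero (by omega)
    subst hd; subst hd'
    refine ⟨?_, rfl⟩
    have e1 := h1.2.2; have e2 := h2.2.2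
    rw [add_zero] at e1 e2
    rw [← e1, ← e2]
  | succ N ih =>
    intro γ a d a' d' hdeg h1 h2
    by_cases hB : γ ∈ minGens J
    · have hd := EKP.minGens_d_eq_zero hJ hB h1
      have hd' := EKP.minGens_d_eq_zero hJ hB h2
      subst hd; subst hd'
      refine ⟨?_, rfl⟩
      have e1 := h1.2.2; have e2 := h2.2.2
      rw [add_zero] at e1 e2
      rw [← e1, ← e2]
    · have hsne : γ.support.Nonempty := by
        rw [Finsupp.support_nonempty_iff]
        rintro rfl
        refine hB (zero_mem_minGens ?_)
        have := h1.2.2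
        rw [this]
        exact hJ a h1.1.1 d
      set j0 := γ.support.min' hsne with hj0
      have hd1 := EKP.min_mem_d hJ hB h1 hsne
      have hd2 := EKP.min_mem_d hJ hB h2 hsne
      rw [← hj0] at hd1 hd2
      have hs1 := EKP.strip hJ h1 hd1
      have hs2 := EKP.strip hJ h2 hd2
      have hγj0 : γ j0 ≠ 0 := Finsupp.mem_support_iff.1 (γ.support.min'_mem hsne)
      have hdeg' : mdeg (γ - Finsupp.single j0 1) ≤ N := by
        have := mdeg_sub_single hγj0
        omega
      obtain ⟨ha, hdd⟩ := ih (γ - Finsupp.single j0 1) a (d - Finsupp.single j0 1)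
        a' (d' - Finsupp.single j0 1) hdeg' hs1 hs2
      refine ⟨ha, ?_⟩
      ext k
      have hk := DFunLike.congr_fun hdd k
      simp only [apply_sub, single_app] at hk
      split_ifs at hk with h
      · subst h
        omega
      · omega

/-- Key Lemma A: tails of the reduction strictly decrease in the lex order of the
`δ`-part of the EK decomposition. -/
lemma lemA (hJ : IsMonomialIdeal J) {β δ a' d' : Mon n} (hβ : β ∉ J)
    (h : EKP J a' d' (δ + β)) : lexLt d' δ := by
  have ha'J : a' ∈ J := h.1.1
  have heq : δ + β = a' + d' := h.2.2
  rcases eq_or_ne d' δ with hde | hne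
  · exfalso
    apply hβ
    have hβa : β = a' := by
      rw [hde] at heq
      have h2 : β + δ = a' + δ := by rw [add_comm β δ]; exact heq
      exact add_right_cancel h2
    exact hβa ▸ ha'J
  rcases lexLt_total hne with hlt | hlt
  · exact hlt
  · exfalso
    obtain ⟨t, ht, hta⟩ := hlt
    have hts : t ∈ d'.support := Finsupp.mem_support_iff.2 (by omega)
    have hsuppa' : ∀ r ∈ a'.support, t ≤ r := fun r hr => h.2.1 r hr t hts
    have hle : ∀ r, a' r ≤ β r := by
      intro r
      have heqr : δ r + β r = a' r + d' r := by
        have := DFunLike.congr_fun heq r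
        rw [apply_add, apply_add] at this
        exact this
      rcases lt_trichotomy r t with hrt | hrt | hrt
      · have hz : a' r = 0 := by
          by_contra hcc
          exact absurd (hsuppa' r (Finsupp.mem_support_iff.2 hcc)) (by omega)
        omega
      · subst hrt; omega
      · have := hta r hrt
        omega
    apply hβ
    have hβeq : β = a' + (β - a') := by
      ext k
      simp only [apply_add, apply_sub]
      have := hle k
      omega
    rw [hβeq]
    exact hJ a' ha'J _

/-- Key Lemma H: the EK `δ`-part of `x_i·x^α/x_{min α}` involves only variables `< i`. -/
lemma lemH (hJ : IsStronglyStable J) {α : Mon n} (hα : α ∈ minGens J)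
    {i j : Fin (n + 1)} (hjv : α j ≠ 0) (hmin : ∀ k ∈ α.support, j ≤ k) (hij : j < i)
    {a' d' : Mon n} (hek : EKP J a' d' (α - Finsupp.single j 1 + Finsupp.single i 1)) :
    ∀ t ∈ d'.support, t < i := by
  set η : Mon n := α - Finsupp.single j 1 + Finsupp.single i 1 with hηdef
  by_contra hc
  push_neg at hc
  obtain ⟨t, hts, hti⟩ := hc
  have htv : d' t ≠ 0 := Finsupp.mem_support_iff.1 hts
  have hsuppa' : ∀ r ∈ a'.support, i ≤ r := fun r hr => le_trans hti (hek.2.1 r hr t hts)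
  have ha'low : ∀ r, r < i → a' r = 0 := by
    intro r hr
    by_contra hcc
    exact absurd (hsuppa' r (Finsupp.mem_support_iff.2 hcc)) (by omega)
  have hηr : ∀ r, η r = a' r + d' r := by
    intro r
    have := DFunLike.congr_fun hek.2.2 r
    rw [apply_add] at this
    exact this
  have hηval : ∀ r, η r = α r - (if j = r then 1 else 0) + (if i = r then 1 else 0) := by
    intro r
    rw [hηdef, apply_add, apply_sub, single_app, single_app]
  classical
  set D : Mon n := d'.filter (fun r => i ≤ r) with hD
  have hDapp : ∀ r, D r = if i ≤ r then d' r else 0 := by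
    intro r; rw [hD, Finsupp.filter_apply]
  set θ : Mon n := a' + D with hθ
  have hθJ : θ ∈ J := hJ.1 a' hek.1.1 D
  have hθapp : ∀ r, θ r = a' r + D r := fun r => apply_add _ _ r
  have hθlow : ∀ r, r < i → θ r = 0 := by
    intro r hr
    rw [hθapp r, hDapp r, if_neg (by omega), ha'low r hr]
  have hθhigh : ∀ r, i ≤ r → θ r = η r := by
    intro r hr
    rw [hθapp r, hDapp r, if_pos hr, hηr r]
  have hθiv : θ i = α i + 1 := by
    rw [hθhigh i le_rfl, hηval i, if_neg (by omega), if_pos rfl]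
    omega
  -- show θ - e_i ∈ J
  have hθei : θ - Finsupp.single i 1 ∈ J := by
    rcases eq_or_ne (d' i) 0 with hdi | hdi
    · -- t > i; use strong stability
      have hit : i < t := lt_of_le_of_ne hti (fun hh => htv (hh ▸ hdi))
      have hDt : D t ≠ 0 := by rw [hDapp t, if_pos hti]; exact htv
      have hφJ : a' + (D - Finsupp.single t 1) ∈ J := hJ.1 a' hek.1.1 _
      have hφi : (a' + (D - Finsupp.single t 1) : Mon n) i ≠ 0 := by
        rw [apply_add, apply_sub, single_app, if_neg (by omega : ¬ t = i)]
        have h1 := hθiv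
        rw [hθapp i] at h1
        omega
      have hss := hJ.2 _ hφJ i hφi t hit
      have heq2 : a' + (D - Finsupp.single t 1) - Finsupp.single i 1 + Finsupp.single t 1
          = θ - Finsupp.single i 1 := by
        ext k
        have hDk := hDapp k
        have hθk := hθapp k
        simp only [apply_add, apply_sub, single_app]
        rcases eq_or_ne t k with rfl | hkt
        · rw [if_pos hti] at hDk
          rw [if_pos rfl, if_neg (by omega : ¬ i = t)]
          omega
        · rw [if_neg hkt]
          rcases eq_or_ne i k with rfl | hki
          · rw [if_pos rfl]
            rw [if_pos le_rfl] at hDk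
            omega
          · rw [if_neg hki]
            rcases le_or_gt i k with hik | hik
            · rw [if_pos hik] at hDk
              omega
            · rw [if_neg (by omega)] at hDk
              omega
      rwa [heq2] at hss
    · -- d' i ≥ 1
      have hDi : D i ≠ 0 := by rw [hDapp i, if_pos le_rfl]; exact hdi
      have hmem : a' + (D - Finsupp.single i 1) ∈ J := hJ.1 a' hek.1.1 _
      have heq2 : a' + (D - Finsupp.single i 1) = θ - Finsupp.single i 1 := by
        ext k
        have hDk := hDapp k
        have hθk := hθapp k
        simp only [apply_add, apply_sub, single_app]
        rcases eq_or_ne i k with rfl | hki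
        · rw [if_pos rfl]
          rw [if_pos le_rfl] at hDk
          omega
        · rw [if_neg hki]
          omega
      rwa [heq2] at hmem
  -- θ - e_i ≤ α - e_j pointwise, so α - e_j ∈ J, contradicting minimality
  apply hα.2 j hjv
  have hle : ∀ r, (θ - Finsupp.single i 1 : Mon n) r ≤ (α - Finsupp.single j 1 : Mon n) r := by
    intro r
    rw [apply_sub, apply_sub, single_app, single_app]
    rcases lt_trichotomy r i with hr | hr | hr
    · rw [hθlow r hr]
      omega
    · subst hr
      rw [hθiv, if_pos rfl, if_neg (by omega : ¬ j = r)]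
      omega
    · rw [hθhigh r hr.le, hηval r, if_neg (by omega : ¬ j = r), if_neg (by omega : ¬ i = r)]
      omega
  have heq3 : α - Finsupp.single j 1
      = (θ - Finsupp.single i 1) + ((α - Finsupp.single j 1) - (θ - Finsupp.single i 1)) := by
    ext k
    have := hle k
    simp only [apply_add, apply_sub, single_app] at this ⊢
    omega
  rw [heq3]
  exact hJ.1 _ hθei _

end AuxEK
end MarkedFamilies
end
noncomputable section
namespace MarkedFamilies
open MvPolynomial
section AuxPoly
variable {n : ℕ} {A : Type*} [CommRing A] {J : Set (Mon n)}
  {F : Mon n → MvPolynomial (Fin (n + 1)) A}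

lemma isHomog_iff {p : MvPolynomial (Fin (n + 1)) A} {s : ℕ} :
    p.IsHomogeneous s ↔ ∀ d : Mon n, p.coeff d ≠ 0 → mdeg d = s := by
  unfold MvPolynomial.IsHomogeneous MvPolynomial.IsWeightedHomogeneous
  have h : ∀ d : Mon n, (Finsupp.weight 1) d = mdeg d := by
    intro d
    rw [show mdeg d = Finsupp.degree d from rfl, Finsupp.degree_eq_weight_one]
    rfl
  constructor
  · intro hh d hd; rw [← h d]; exact hh hd
  · intro hh d hd; rw [h d]; exact hh d hd

/-- A marked polynomial is homogeneous of the degree of its head. -/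
lemma F_homog (hF : IsMarkedSet J F) {α : Mon n} (hα : α ∈ minGens J) :
    (F α).IsHomogeneous (mdeg α) := by
  rw [isHomog_iff]
  intro d hd
  rcases eq_or_ne d α with rfl | hne
  · rfl
  · exact ((hF α hα).2 d (by simpa [MvPolynomial.mem_support_iff] using hd) hne).2

lemma mem_nSpan_iff {p : MvPolynomial (Fin (n + 1)) A} :
    p ∈ nSpan A J ↔ ∀ γ ∈ J, p.coeff γ = 0 := by
  constructor
  · intro hp
    have hle : nSpan A J ≤
        { carrier := {q : MvPolynomial (Fin (n + 1)) A | ∀ γ ∈ J, q.coeff γ = 0}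
          add_mem' := by intro a b ha hb γ hγ; simp [coeff_add, ha γ hγ, hb γ hγ]
          zero_mem' := by intro γ hγ; simp
          smul_mem' := by intro c q hq γ hγ; simp [coeff_smul, hq γ hγ] } := by
      rw [nSpan, Submodule.span_le]
      rintro q ⟨β, hβ, rfl⟩ γ hγ
      classical
      rw [coeff_monomial, if_neg]
      rintro rfl
      exact hβ hγ
    exact hle hp
  · intro hp
    rw [p.as_sum]
    apply Submodule.sum_mem
    intro v hv
    have hvJ : v ∉ J := by
      intro hvJ
      exact (MvPolynomial.mem_support_iff.1 hv) (hp v hvJ)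
    have : (monomial v (p.coeff v) : MvPolynomial (Fin (n + 1)) A)
        = p.coeff v • monomial v 1 := by
      rw [MvPolynomial.smul_monomial, smul_eq_mul, mul_one]
    rw [this]
    exact Submodule.smul_mem _ _ (Submodule.subset_span ⟨v, hvJ, rfl⟩)

lemma nSpanDeg_le_nSpan (s : ℕ) : nSpanDeg A J s ≤ nSpan A J := by
  rw [nSpanDeg, Submodule.span_le]
  rintro q ⟨β, hβ, hd, rfl⟩
  exact Submodule.subset_span ⟨β, hβ, rfl⟩

lemma nSpanDeg_le_homog (s : ℕ) :
    nSpanDeg A J s ≤ homogeneousSubmodule (Fin (n + 1)) A s := by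
  rw [nSpanDeg, Submodule.span_le]
  rintro q ⟨β, hβ, hd, rfl⟩
  rw [SetLike.mem_coe, mem_homogeneousSubmodule]
  exact isHomogeneous_monomial 1 hd

/-- FSet with lex bound `δ ≤ ε` on the multiplier. -/
def FSetLe (J : Set (Mon n)) (F : Mon n → MvPolynomial (Fin (n + 1)) A) (s : ℕ)
    (ε : Mon n) : Set (MvPolynomial (Fin (n + 1)) A) :=
  {p | ∃ α δ : Mon n, α ∈ minGens J ∧ mdeg α + mdeg δ = s ∧ minGeMax α δ ∧
        (δ = ε ∨ lexLt δ ε) ∧ p = monomial δ (1 : A) * F α}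

/-- FSet with strict lex bound `δ < ε` on the multiplier. -/
def FSetLt (J : Set (Mon n)) (F : Mon n → MvPolynomial (Fin (n + 1)) A) (s : ℕ)
    (ε : Mon n) : Set (MvPolynomial (Fin (n + 1)) A) :=
  {p | ∃ α δ : Mon n, α ∈ minGens J ∧ mdeg α + mdeg δ = s ∧ minGeMax α δ ∧
        lexLt δ ε ∧ p = monomial δ (1 : A) * F α}

lemma FSetLe_subset_FSet (s : ℕ) (ε : Mon n) : FSetLe J F s ε ⊆ FSet J F s := by
  rintro p ⟨α, δ, h1, h2, h3, _, h5⟩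
  exact ⟨α, δ, h1, h2, h3, h5⟩

lemma FSetLt_subset_FSet (s : ℕ) (ε : Mon n) : FSetLt J F s ε ⊆ FSet J F s := by
  rintro p ⟨α, δ, h1, h2, h3, _, h5⟩
  exact ⟨α, δ, h1, h2, h3, h5⟩

lemma FSetLe_subset_FSetLt {s : ℕ} {d ε : Mon n} (h : lexLt d ε) :
    FSetLe J F s d ⊆ FSetLt J F s ε := by
  rintro p ⟨α, δ, h1, h2, h3, h4, h5⟩
  refine ⟨α, δ, h1, h2, h3, ?_, h5⟩
  rcases h4 with rfl | h4
  · exact h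
  · exact lexLt_trans h4 h

lemma FSetLe_mono {s : ℕ} {d ε : Mon n} (h : lexLt d ε) :
    FSetLe J F s d ⊆ FSetLe J F s ε := by
  rintro p ⟨α, δ, h1, h2, h3, h4, h5⟩
  refine ⟨α, δ, h1, h2, h3, ?_, h5⟩
  rcases h4 with rfl | h4
  · exact Or.inr h
  · exact Or.inr (lexLt_trans h4 h)

/-- Lemma C: reduction of a monomial of `J` along the marked set, with lex control. -/
lemma lemC (hJ : IsStronglyStable J) (hF : IsMarkedSet J F) :
    ∀ d a γ : Mon n, EKP J a d γ →
      (monomial γ (1 : A)) ∈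
        Submodule.span A (FSetLe J F (mdeg γ) d) ⊔ nSpanDeg A J (mdeg γ) := by
  intro d
  induction d using (lexLt_wf (n := n)).induction with
  | _ d ih =>
  intro a γ hekp
  have hγeq : γ = a + d := hekp.2.2
  have hdeg : mdeg a + mdeg d = mdeg γ := by rw [hγeq, mdeg_add]
  set g : MvPolynomial (Fin (n + 1)) A := F a - monomial a 1 with hg
  have hT : (monomial d (1 : A) * F a) ∈
      Submodule.span A (FSetLe J F (mdeg γ) d) ⊔ nSpanDeg A J (mdeg γ) := by
    apply Submodule.mem_sup_left
    exact Submodule.subset_span ⟨a, d, hekp.1, hdeg, hekp.2.1, Or.inl rfl, rfl⟩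
  have hsplit : monomial γ (1 : A) = monomial d 1 * F a - monomial d 1 * g := by
    rw [hg, mul_sub, monomial_mul, mul_one, add_comm d a, ← hγeq]
    ring
  rw [hsplit]
  refine Submodule.sub_mem _ hT ?_
  have hgsum : monomial d (1 : A) * g = ∑ v ∈ g.support, (g.coeff v) • monomial (d + v) 1 := by
    conv_lhs => rw [g.as_sum]
    rw [Finset.mul_sum]
    refine Finset.sum_congr rfl ?_
    intro v hv
    rw [monomial_mul, one_mul, MvPolynomial.smul_monomial, smul_eq_mul, mul_one]
  rw [hgsum]
  apply Submodule.sum_mem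
  intro v hv
  apply Submodule.smul_mem
  -- analysis of v
  classical
  have hva : v ≠ a := by
    intro h
    apply MvPolynomial.mem_support_iff.1 hv
    rw [h, hg, coeff_sub, coeff_monomial, if_pos rfl, (hF a hekp.1).1, sub_self]
  have hvF : v ∈ (F a).support := by
    classical
    have hcv : g.coeff v ≠ 0 := MvPolynomial.mem_support_iff.1 hv
    rw [hg, coeff_sub, coeff_monomial, if_neg (Ne.symm hva), sub_zero] at hcv
    exact MvPolynomial.mem_support_iff.2 hcv
  obtain ⟨hvJ, hvdeg⟩ := (hF a hekp.1).2 v hvF hva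
  have hμdeg : mdeg (d + v) = mdeg γ := by
    rw [mdeg_add, ← hdeg, hvdeg]
    omega
  by_cases hμJ : (d + v : Mon n) ∈ J
  · obtain ⟨a'', d'', hekp''⟩ := exists_ekp hJ _ hμJ
    have hlt : lexLt d'' d := lemA hJ.1 hvJ hekp''
    have := ih d'' hlt a'' (d + v) hekp''
    rw [hμdeg] at this
    refine SetLike.le_def.1 (sup_le_sup_right (Submodule.span_mono ?_) _) this
    intro q hq
    exact FSetLe_mono hlt hq
  · apply Submodule.mem_sup_right
    exact Submodule.subset_span ⟨d + v, hμJ, hμdeg, rfl⟩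

/-- Decomposition of a homogeneous polynomial into `⟨F^(s)⟩ + ⟨N(J)_s⟩`. -/
lemma homog_decomp (hJ : IsStronglyStable J) (hF : IsMarkedSet J F)
    {p : MvPolynomial (Fin (n + 1)) A} {s : ℕ} (hp : p.IsHomogeneous s) :
    p ∈ Submodule.span A (FSet J F s) ⊔ nSpanDeg A J s := by
  rw [p.as_sum]
  apply Submodule.sum_mem
  intro v hv
  have hvd : mdeg v = s := (isHomog_iff.1 hp) v (MvPolynomial.mem_support_iff.1 hv)
  have hrw : (monomial v (p.coeff v) : MvPolynomial (Fin (n + 1)) A)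
      = p.coeff v • monomial v 1 := by
    rw [MvPolynomial.smul_monomial, smul_eq_mul, mul_one]
  rw [hrw]
  apply Submodule.smul_mem
  by_cases hvJ : v ∈ J
  · obtain ⟨a, d, hekp⟩ := exists_ekp hJ v hvJ
    have := lemC hJ hF d a v hekp
    rw [hvd] at this
    exact SetLike.le_def.1 (sup_le_sup_right (Submodule.span_mono (FSetLe_subset_FSet _ _)) _) this
  · exact Submodule.mem_sup_right (Submodule.subset_span ⟨v, hvJ, hvd, rfl⟩)

end AuxPoly
end MarkedFamilies
end
noncomputable section
namespace MarkedFamilies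
open MvPolynomial
section AuxInj
variable {n : ℕ} {A : Type*} [CommRing A] {J : Set (Mon n)}
  {F : Mon n → MvPolynomial (Fin (n + 1)) A}

lemma exists_lex_max {ι : Type*} (T : Finset ι) (hT : T.Nonempty) (f : ι → Mon n) :
    ∃ k ∈ T, ∀ k' ∈ T, ¬ lexLt (f k) (f k') := by
  classical
  induction T using Finset.induction_on with
  | empty => exact absurd hT (by simp)
  | @insert a T' ha ih =>
    rcases T'.eq_empty_or_nonempty with rfl | hne
    · exact ⟨a, Finset.mem_insert_self _ _, by
        intro k' hk'
        rw [Finset.mem_insert] at hk'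
        rcases hk' with rfl | hk'
        · exact lexLt_irrefl _
        · simp at hk'⟩
    · obtain ⟨k, hkT, hmax⟩ := ih hne
      by_cases hcmp : lexLt (f k) (f a)
      · refine ⟨a, Finset.mem_insert_self _ _, ?_⟩
        intro k' hk'
        rw [Finset.mem_insert] at hk'
        rcases hk' with rfl | hk'
        · exact lexLt_irrefl _
        · intro hlt
          exact hmax k' hk' (lexLt_trans hcmp hlt)
      · refine ⟨k, Finset.mem_insert_of_mem hkT, ?_⟩
        intro k' hk'
        rw [Finset.mem_insert] at hk'
        rcases hk' with rfl | hk'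
        · exact hcmp
        · exact hmax k' hk'

lemma lemB_aux (hJ : IsStronglyStable J) (hF : IsMarkedSet J F) (s : ℕ) :
    ∀ (N : ℕ) {ι : Type} (T : Finset ι) (c : ι → A) (pr : ι → Mon n × Mon n),
      T.card ≤ N →
      (∀ k ∈ T, (pr k).1 ∈ minGens J ∧ minGeMax (pr k).1 (pr k).2 ∧
        mdeg (pr k).1 + mdeg (pr k).2 = s) →
      (∑ k ∈ T, c k • (monomial (pr k).2 (1 : A) * F (pr k).1)) ∈ nSpan A J →
      (∑ k ∈ T, c k • (monomial (pr k).2 (1 : A) * F (pr k).1)) = 0 := by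
  intro N
  induction N with
  | zero =>
    intro ι T c pr hcard _ _
    have h0 : T = ∅ := Finset.card_eq_zero.1 (Nat.le_zero.1 hcard)
    subst h0
    simp
  | succ N ih =>
    intro ι T c pr hcard hcompat hN
    classical
    set S := T.filter (fun k => c k ≠ 0) with hS
    rcases S.eq_empty_or_nonempty with hSe | hSne
    · apply Finset.sum_eq_zero
      intro k hk
      have hck : c k = 0 := by
        by_contra hc
        have : k ∈ S := Finset.mem_filter.2 ⟨hk, hc⟩
        rw [hSe] at this
        simp at this
      rw [hck, zero_smul]
    · obtain ⟨k0, hk0S, hmax⟩ := exists_lex_max S hSne (fun k => (pr k).2)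
      have hk0T : k0 ∈ T := (Finset.mem_filter.1 hk0S).1
      have hck0 : c k0 ≠ 0 := (Finset.mem_filter.1 hk0S).2
      obtain ⟨hα0, hmm0, hdeg0⟩ := hcompat k0 hk0T
      obtain ⟨γ0, hγ0⟩ : ∃ g : Mon n, g = (pr k0).1 + (pr k0).2 := ⟨_, rfl⟩
      have hekp0 : EKP J (pr k0).1 (pr k0).2 γ0 := ⟨hα0, hmm0, hγ0⟩
      have hγ0J : γ0 ∈ J := hekp0.memJ hJ.1
      have hle0 : (pr k0).2 ≤ γ0 := by rw [hγ0]; exact le_add_self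
      have hsub0 : γ0 - (pr k0).2 = (pr k0).1 := by
        rw [hγ0]
        ext r
        simp only [apply_sub, apply_add]
        omega
      have hheadcoeff : ∀ k ∈ T, pr k = pr k0 →
          coeff γ0 (monomial (pr k).2 (1 : A) * F (pr k).1) = 1 := by
        intro k hk hpk
        rw [hpk, coeff_monomial_mul', if_pos hle0, hsub0, one_mul, (hF _ hα0).1]
      have hoffcoeff : ∀ k ∈ T, pr k ≠ pr k0 → c k ≠ 0 →
          coeff γ0 (monomial (pr k).2 (1 : A) * F (pr k).1) = 0 := by
        intro k hk hpk hck
        by_contra hne0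
        rw [coeff_monomial_mul'] at hne0
        split_ifs at hne0 with hle
        · rw [one_mul] at hne0
          obtain ⟨v, hv⟩ : ∃ w : Mon n, w = γ0 - (pr k).2 := ⟨_, rfl⟩
          rw [← hv] at hne0
          have hveq : γ0 = (pr k).2 + v := by
            ext r
            have hler := Finsupp.le_def.1 hle r
            rw [hv]
            simp only [apply_add, apply_sub]
            omega
          obtain ⟨hαk, hmmk, hdegk⟩ := hcompat k hk
          rcases eq_or_ne v (pr k).1 with hva | hva
          · have hekpk : EKP J (pr k).1 (pr k).2 γ0 :=
              ⟨hαk, hmmk, by rw [hveq, hva, add_comm]⟩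
            obtain ⟨he1, he2⟩ := ekp_unique hJ.1 γ0 _ _ _ _ hekpk hekp0
            exact hpk (Prod.ext he1 he2)
          · have hvF : v ∈ (F (pr k).1).support := MvPolynomial.mem_support_iff.2 hne0
            obtain ⟨hvJ, _⟩ := (hF _ hαk).2 v hvF hva
            have hekp0' : EKP J (pr k0).1 (pr k0).2 ((pr k).2 + v) := by
              rw [← hveq]; exact hekp0
            have hlt := lemA hJ.1 hvJ hekp0'
            exact hmax k (Finset.mem_filter.2 ⟨hk, hck⟩) hlt
        · exact hne0 rfl
      -- the coefficient of the total sum at γ0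
      have hcoefftot : coeff γ0 (∑ k ∈ T, c k • (monomial (pr k).2 (1 : A) * F (pr k).1))
          = ∑ k ∈ T.filter (fun k => pr k = pr k0), c k := by
        rw [MvPolynomial.coeff_sum]
        rw [← Finset.sum_filter_add_sum_filter_not T (fun k => pr k = pr k0)]
        have h1 : ∀ k ∈ T.filter (fun k => pr k = pr k0),
            coeff γ0 (c k • (monomial (pr k).2 (1 : A) * F (pr k).1)) = c k := by
          intro k hk
          obtain ⟨hkT, hpk⟩ := Finset.mem_filter.1 hk
          rw [coeff_smul, hheadcoeff k hkT hpk, smul_eq_mul, mul_one]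
        have h2 : ∀ k ∈ T.filter (fun k => ¬ pr k = pr k0),
            coeff γ0 (c k • (monomial (pr k).2 (1 : A) * F (pr k).1)) = 0 := by
          intro k hk
          obtain ⟨hkT, hpk⟩ := Finset.mem_filter.1 hk
          rcases eq_or_ne (c k) 0 with hck | hck
          · rw [hck, zero_smul, coeff_zero]
          · rw [coeff_smul, hoffcoeff k hkT hpk hck, smul_eq_mul, mul_zero]
        rw [Finset.sum_congr rfl h1, Finset.sum_congr rfl h2, Finset.sum_const_zero, add_zero]
      have hzero : (∑ k ∈ T.filter (fun k => pr k = pr k0), c k) = 0 := by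
        rw [← hcoefftot]
        exact mem_nSpan_iff.1 hN γ0 hγ0J
      -- split the sum
      set T0 := T.filter (fun k => pr k = pr k0) with hT0
      set T1 := T.filter (fun k => ¬ pr k = pr k0) with hT1
      have hsplit : (∑ k ∈ T, c k • (monomial (pr k).2 (1 : A) * F (pr k).1))
          = (∑ k ∈ T0, c k • (monomial (pr k).2 (1 : A) * F (pr k).1))
            + (∑ k ∈ T1, c k • (monomial (pr k).2 (1 : A) * F (pr k).1)) :=
        (Finset.sum_filter_add_sum_filter_not T _ _).symm
      have hT0sum : (∑ k ∈ T0, c k • (monomial (pr k).2 (1 : A) * F (pr k).1)) = 0 := by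
        have : ∀ k ∈ T0, c k • (monomial (pr k).2 (1 : A) * F (pr k).1)
            = c k • (monomial (pr k0).2 (1 : A) * F (pr k0).1) := by
          intro k hk
          rw [(Finset.mem_filter.1 hk).2]
        rw [Finset.sum_congr rfl this, ← Finset.sum_smul, hzero, zero_smul]
      have hT1card : T1.card ≤ N := by
        have hc0 : k0 ∈ T0 := Finset.mem_filter.2 ⟨hk0T, rfl⟩
        have h1 : T0.card + T1.card = T.card := by
          rw [hT0, hT1]
          exact Finset.card_filter_add_card_filter_not _
        have h2 : 1 ≤ T0.card := Finset.card_pos.2 ⟨k0, hc0⟩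
        omega
      have hT1sum : (∑ k ∈ T1, c k • (monomial (pr k).2 (1 : A) * F (pr k).1)) = 0 := by
        apply ih T1 c pr hT1card
        · intro k hk
          exact hcompat k (Finset.mem_filter.1 hk).1
        · have : (∑ k ∈ T1, c k • (monomial (pr k).2 (1 : A) * F (pr k).1))
              = (∑ k ∈ T, c k • (monomial (pr k).2 (1 : A) * F (pr k).1)) := by
            rw [hsplit, hT0sum, zero_add]
          rw [this]
          exact hN
      rw [hsplit, hT0sum, hT1sum, add_zero]

/-- Lemma B: the span of `F^(s)` meets `⟨N(J)⟩` trivially. -/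
lemma lemB (hJ : IsStronglyStable J) (hF : IsMarkedSet J F) {s : ℕ}
    {p : MvPolynomial (Fin (n + 1)) A}
    (hp : p ∈ Submodule.span A (FSet J F s)) (hpN : p ∈ nSpan A J) : p = 0 := by
  rw [Submodule.mem_span_set'] at hp
  obtain ⟨N, c, gv, hsum⟩ := hp
  have hmem : ∀ k : Fin N, ∃ α δ : Mon n, α ∈ minGens J ∧ mdeg α + mdeg δ = s ∧
      minGeMax α δ ∧ (gv k : MvPolynomial (Fin (n + 1)) A) = monomial δ (1 : A) * F α :=
    fun k => (gv k).2
  choose fα fδ hα hdeg hmm heq using hmem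
  have hrw : ∀ k : Fin N, (gv k : MvPolynomial (Fin (n + 1)) A)
      = monomial ((fα k, fδ k).2) (1 : A) * F ((fα k, fδ k).1) := heq
  have hp0 : (∑ k : Fin N, c k • (monomial ((fα k, fδ k).2) (1 : A) * F ((fα k, fδ k).1))) = p := by
    rw [← hsum]
    exact Finset.sum_congr rfl fun k _ => by rw [hrw k]
  rw [← hp0]
  apply lemB_aux hJ hF s N Finset.univ c (fun k => (fα k, fδ k)) (by simp)
  · intro k _
    exact ⟨hα k, hmm k, hdeg k⟩
  · rw [hp0]
    exact hpN

end AuxInj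
end MarkedFamilies
end
noncomputable section
namespace MarkedFamilies
open MvPolynomial
section AuxMaster
variable {n : ℕ} {A : Type*} [CommRing A] {J : Set (Mon n)}
  {F : Mon n → MvPolynomial (Fin (n + 1)) A}

lemma F_mem_markedIdeal {α : Mon n} (hα : α ∈ minGens J) : F α ∈ markedIdeal J F :=
  Ideal.subset_span ⟨α, hα, rfl⟩

lemma span_FSet_le (s : ℕ) :
    Submodule.span A (FSet J F s) ≤ Submodule.restrictScalars A (markedIdeal J F) := by
  rw [Submodule.span_le]
  rintro p ⟨β, g, hβ, _, _, rfl⟩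
  exact Ideal.mul_mem_left _ _ (F_mem_markedIdeal hβ)

lemma span_FSetLt_le (s : ℕ) (ε : Mon n) :
    Submodule.span A (FSetLt J F s ε) ≤ Submodule.restrictScalars A (markedIdeal J F) := by
  rw [Submodule.span_le]
  rintro p ⟨β, g, hβ, _, _, _, rfl⟩
  exact Ideal.mul_mem_left _ _ (F_mem_markedIdeal hβ)

/-- The Master Lemma: under condition (c) in degrees `≤ m+1`, every multiple
`x^η f_α` lies in the span of `F^(s)`. -/
lemma master (hJ : IsStronglyStable J) (hF : IsMarkedSet J F) (m : ℕ)
    (hm : ∀ α ∈ minGens J, mdeg α ≤ m)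
    (h3 : ∀ s : ℕ, s ≤ m + 1 →
      (Submodule.restrictScalars A (markedIdeal J F) ⊓ nSpan A J)
        ⊓ homogeneousSubmodule (Fin (n + 1)) A s = ⊥) :
    ∀ η α : Mon n, α ∈ minGens J →
      monomial η (1 : A) * F α ∈ Submodule.span A (FSet J F (mdeg α + mdeg η)) := by
  classical
  intro η
  induction η using (lexLt_wf (n := n)).induction with
  | _ η ihη =>
  intro α hα
  by_cases hmm : minGeMax α η
  · exact Submodule.subset_span ⟨α, η, hα, rfl, hmm, rfl⟩
  -- bad case
  obtain ⟨i', hi', j', hj', hij'⟩ : ∃ i' ∈ α.support, ∃ j' ∈ η.support, ¬ j' ≤ i' := by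
    by_contra hc
    push_neg at hc
    exact hmm fun i hi j hj => hc i hi j hj
  have hαne : α.support.Nonempty := ⟨i', hi'⟩
  have hηne : η.support.Nonempty := ⟨j', hj'⟩
  set i := η.support.max' hηne with hi
  set j := α.support.min' hαne with hj
  have hij : j < i := by
    have h1 : j ≤ i' := α.support.min'_le i' hi'
    have h2 : j' ≤ i := η.support.le_max' j' hj'
    omega
  have hjv : α j ≠ 0 := Finsupp.mem_support_iff.1 (α.support.min'_mem hαne)
  have hηi : η i ≠ 0 := Finsupp.mem_support_iff.1 (η.support.max'_mem hηne)
  have hjmin : ∀ k ∈ α.support, j ≤ k := fun k hk => α.support.min'_le k hk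
  have himax : ∀ k ∈ η.support, k ≤ i := fun k hk => η.support.le_max' k hk
  -- δ := η - e_i
  obtain ⟨δ, hδ⟩ : ∃ x : Mon n, x = η - Finsupp.single i 1 := ⟨_, rfl⟩
  have hηδ : η = δ + Finsupp.single i 1 := by
    ext r
    rw [hδ]
    simp only [apply_add, apply_sub, single_app]
    split_ifs <;> subst_vars <;> omega
  -- η̃ := α - e_j + e_i ∈ J
  obtain ⟨ητ, hητ⟩ : ∃ x : Mon n, x = α - Finsupp.single j 1 + Finsupp.single i 1 := ⟨_, rfl⟩
  have hητJ : ητ ∈ J := by rw [hητ]; exact hJ.2 α hα.1 j hjv i hij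
  obtain ⟨a', d', hek⟩ := exists_ekp hJ ητ hητJ
  have ha'min : a' ∈ minGens J := hek.1
  have hd'lt : ∀ t ∈ d'.support, t < i := by
    apply lemH hJ hα hjv hjmin hij
    rw [← hητ]
    exact hek
  have hlexH : lexLt (Finsupp.single j 1 + d') (Finsupp.single i 1) := by
    apply lexLt_single_of_support_lt
    intro t ht
    rw [support_add_eq] at ht
    rcases Finset.mem_union.1 ht with ht | ht
    · have : t = j := by
        by_contra hc
        simp only [Finsupp.mem_support_iff, single_app, if_neg (Ne.symm hc)] at ht
        exact ht rfl
      subst this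
      exact hij
    · exact hd'lt t ht
  -- degree bookkeeping
  have hmdegtau : mdeg ητ = mdeg α := by
    rw [hητ, mdeg_add, mdeg_single]
    have := mdeg_sub_single hjv
    omega
  have harith : mdeg a' + mdeg d' = mdeg α := by
    have h1 := congrArg mdeg hek.2.2
    rw [mdeg_add] at h1
    omega
  have hdegη : mdeg η = mdeg δ + 1 := by rw [hηδ, mdeg_add, mdeg_single]
  -- pointwise values of ητ
  have hηitems : ∀ r, ητ r = a' r + d' r := fun r => by
    have := DFunLike.congr_fun hek.2.2 r
    rwa [apply_add] at this
  have hηvals : ∀ r, ητ r = α r - (if j = r then 1 else 0) + (if i = r then 1 else 0) :=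
    fun r => by rw [hητ, apply_add, apply_sub, single_app, single_app]
  have hheadeq : (Finsupp.single j 1 + d' + a' : Mon n) = α + Finsupp.single i 1 := by
    ext r
    have h1 := hηitems r
    have h2 := hηvals r
    simp only [apply_add, single_app]
    split_ifs at h2 ⊢ <;> subst_vars <;> omega
  -- the cancelling combination h
  obtain ⟨h, hh⟩ : ∃ x : MvPolynomial (Fin (n + 1)) A,
      x = monomial (Finsupp.single i 1) (1 : A) * F α
        - monomial (Finsupp.single j 1 + d') (1 : A) * F a' := ⟨_, rfl⟩
  have hhI : h ∈ markedIdeal J F := by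
    rw [hh]
    exact Ideal.sub_mem _ (Ideal.mul_mem_left _ _ (F_mem_markedIdeal hα))
      (Ideal.mul_mem_left _ _ (F_mem_markedIdeal ha'min))
  have hhhom : h.IsHomogeneous (1 + mdeg α) := by
    rw [hh]
    apply MvPolynomial.IsHomogeneous.sub
    · exact (isHomogeneous_monomial (1 : A) (mdeg_single i 1)).mul (F_homog hF hα)
    · have h1 : ((Finsupp.single j 1 + d' : Mon n)).degree = 1 + mdeg d' := by
        rw [show (Finsupp.single j 1 + d' : Mon n).degree
            = mdeg (Finsupp.single j 1 + d') from rfl, mdeg_add, mdeg_single]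
      have h2 := (isHomogeneous_monomial (1 : A) h1).mul (F_homog hF ha'min)
      have hE : (1 + mdeg d') + mdeg a' = 1 + mdeg α := by omega
      rwa [hE] at h2
  -- head coefficient vanishes
  have hT1le : (Finsupp.single i 1 : Mon n) ≤ α + Finsupp.single i 1 := le_add_self
  have hT1sub : (α + Finsupp.single i 1) - Finsupp.single i 1 = α := by
    ext r
    simp only [apply_sub, apply_add]
    omega
  have hT2le : (Finsupp.single j 1 + d' : Mon n) ≤ α + Finsupp.single i 1 := by
    rw [← hheadeq]
    exact le_self_add
  have hT2sub : (α + Finsupp.single i 1) - (Finsupp.single j 1 + d') = a' := by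
    rw [← hheadeq]
    ext r
    simp only [apply_sub, apply_add]
    omega
  have hcoeffhead : coeff (α + Finsupp.single i 1) h = 0 := by
    rw [hh, coeff_sub, coeff_monomial_mul', coeff_monomial_mul', if_pos hT1le, if_pos hT2le,
      hT1sub, hT2sub, one_mul, one_mul, (hF α hα).1, (hF a' ha'min).1, sub_self]
  -- decomposition of h
  have hdecomp : h ∈ Submodule.span A (FSetLt J F (1 + mdeg α) (Finsupp.single i 1))
      ⊔ nSpanDeg A J (1 + mdeg α) := by
    rw [h.as_sum]
    apply Submodule.sum_mem
    intro μ hμ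
    have hμc : h.coeff μ ≠ 0 := MvPolynomial.mem_support_iff.1 hμ
    have hμdeg : mdeg μ = 1 + mdeg α := isHomog_iff.1 hhhom μ hμc
    have hrw : (monomial μ (h.coeff μ) : MvPolynomial (Fin (n + 1)) A)
        = h.coeff μ • monomial μ 1 := by
      rw [MvPolynomial.smul_monomial, smul_eq_mul, mul_one]
    rw [hrw]
    apply Submodule.smul_mem
    by_cases hμJ : μ ∈ J
    · -- find the factorization of μ
      have hμhead : μ ≠ α + Finsupp.single i 1 := by
        intro hfoo
        rw [hfoo] at hμc
        exact hμc hcoeffhead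
      have hfac : ∀ (ε β : Mon n), β ∈ minGens J →
          μ ∈ (monomial ε (1 : A) * F β).support → μ ≠ ε + β →
          ∃ ν : Mon n, ν ∉ J ∧ μ = ε + ν := by
        intro ε β hβ hsup hne
        have hc := MvPolynomial.mem_support_iff.1 hsup
        rw [coeff_monomial_mul'] at hc
        split_ifs at hc with hle
        · rw [one_mul] at hc
          obtain ⟨ν, hν⟩ : ∃ w : Mon n, w = μ - ε := ⟨_, rfl⟩
          have hμεν : μ = ε + ν := by
            ext r
            have hler := Finsupp.le_def.1 hle r
            rw [hν]
            simp only [apply_add, apply_sub]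
            omega
          have hνβ : ν ≠ β := by
            intro hfoo
            exact hne (by rw [hμεν, hfoo])
          rw [← hν] at hc
          exact ⟨ν, ((hF β hβ).2 ν (MvPolynomial.mem_support_iff.2 hc) hνβ).1, hμεν⟩
        · exact (hc rfl).elim
      have hsupp2 : μ ∈ (monomial (Finsupp.single i 1) (1 : A) * F α).support ∪
          (monomial (Finsupp.single j 1 + d') (1 : A) * F a').support := by
        apply MvPolynomial.support_sub
        rw [← hh]
        exact hμ
      have hbound : (∃ ε ν : Mon n, ν ∉ J ∧ μ = ε + ν ∧ lexLt ε (Finsupp.single i 1)) ∨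
          (∃ ν : Mon n, ν ∉ J ∧ μ = Finsupp.single i 1 + ν) := by
        rcases Finset.mem_union.1 hsupp2 with hT1 | hT2
        · refine Or.inr (hfac (Finsupp.single i 1) α hα hT1 ?_)
          intro hfoo
          exact hμhead (hfoo.trans (add_comm _ _))
        · refine Or.inl ?_
          refine ⟨Finsupp.single j 1 + d', ?_⟩
          have := hfac (Finsupp.single j 1 + d') a' ha'min hT2 (by rw [hheadeq]; exact hμhead)
          obtain ⟨ν, h1, h2⟩ := this
          exact ⟨ν, h1, h2, hlexH⟩
      -- in both cases, the EK δ-part of μ is lex-smaller than e_i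
      have hdμ : ∃ aμ dμ : Mon n, EKP J aμ dμ μ ∧ lexLt dμ (Finsupp.single i 1) := by
        obtain ⟨aμ, dμ, hekμ⟩ := exists_ekp hJ μ hμJ
        rcases hbound with ⟨ε, ν, hνJ, hμεν, hεlt⟩ | ⟨ν, hνJ, hμεν⟩
        · refine ⟨aμ, dμ, hekμ, ?_⟩
          have : EKP J aμ dμ (ε + ν) := by rw [← hμεν]; exact hekμ
          exact lexLt_trans (lemA hJ.1 hνJ this) hεlt
        · refine ⟨aμ, dμ, hekμ, ?_⟩
          have : EKP J aμ dμ (Finsupp.single i 1 + ν) := by rw [← hμεν]; exact hekμ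
          exact lemA hJ.1 hνJ this
      obtain ⟨aμ, dμ, hekμ, hdμlt⟩ := hdμ
      have := lemC hJ hF dμ aμ μ hekμ
      rw [hμdeg] at this
      exact SetLike.le_def.1 (sup_le_sup_right
        (Submodule.span_mono (FSetLe_subset_FSetLt hdμlt)) _) this
    · exact Submodule.mem_sup_right (Submodule.subset_span ⟨μ, hμJ, hμdeg, rfl⟩)
  -- split h into p + q and kill q using the hypothesis
  obtain ⟨p, hp, q, hq, hpq⟩ := Submodule.mem_sup.1 hdecomp
  have hq0 : q = 0 := by
    have hqI : q ∈ Submodule.restrictScalars A (markedIdeal J F) := by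
      have hqhp : q = h - p := by rw [← hpq]; ring
      rw [hqhp]
      exact Submodule.sub_mem _ hhI (span_FSetLt_le _ _ hp)
    have hqN : q ∈ nSpan A J := nSpanDeg_le_nSpan _ hq
    have hqH : q ∈ homogeneousSubmodule (Fin (n + 1)) A (1 + mdeg α) := nSpanDeg_le_homog _ hq
    have hs'le : 1 + mdeg α ≤ m + 1 := by
      have := hm α hα
      omega
    have hbot := h3 (1 + mdeg α) hs'le
    have : q ∈ ((Submodule.restrictScalars A (markedIdeal J F) ⊓ nSpan A J)
        ⊓ homogeneousSubmodule (Fin (n + 1)) A (1 + mdeg α)) :=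
      Submodule.mem_inf.2 ⟨Submodule.mem_inf.2 ⟨hqI, hqN⟩, hqH⟩
    rw [hbot] at this
    exact Submodule.mem_bot A |>.1 this
  have hhp : h = p := by rw [← hpq, hq0, add_zero]
  -- assemble
  have hT1eq : monomial (Finsupp.single i 1) (1 : A) * F α
      = monomial (Finsupp.single j 1 + d') (1 : A) * F a' + h := by
    rw [hh]
    ring
  have hprod : monomial η (1 : A) * F α
      = monomial (δ + (Finsupp.single j 1 + d')) (1 : A) * F a' + monomial δ 1 * p := by
    calc monomial η (1 : A) * F α
        = monomial δ (1 : A) * (monomial (Finsupp.single i 1) 1 * F α) := by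
          rw [← mul_assoc, monomial_mul, one_mul, ← hηδ]
      _ = monomial δ (1 : A) * (monomial (Finsupp.single j 1 + d') 1 * F a')
            + monomial δ 1 * h := by rw [hT1eq, mul_add]
      _ = monomial (δ + (Finsupp.single j 1 + d')) (1 : A) * F a' + monomial δ 1 * p := by
          rw [← mul_assoc, monomial_mul, one_mul, hhp]
  rw [hprod]
  apply Submodule.add_mem
  · -- term A: recursion at η₂
    have hlt2 : lexLt (δ + (Finsupp.single j 1 + d')) η := by
      rw [hηδ]
      exact lexLt_add_left δ hlexH
    have hterm := ihη _ hlt2 a' ha'min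
    have hdeq : mdeg a' + mdeg (δ + (Finsupp.single j 1 + d')) = mdeg α + mdeg η := by
      rw [mdeg_add, mdeg_add, mdeg_single]
      omega
    rwa [hdeq] at hterm
  · -- term B: multiply the span by x^δ
    have hgen : ∀ x ∈ FSetLt J F (1 + mdeg α) (Finsupp.single i 1),
        monomial δ (1 : A) * x ∈ Submodule.span A (FSet J F (mdeg α + mdeg η)) := by
      rintro x ⟨β, g, hβ, hdg, hmg, hglt, rfl⟩
      rw [← mul_assoc, monomial_mul, one_mul]
      have hlt3 : lexLt (δ + g) η := by
        rw [hηδ]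
        exact lexLt_add_left δ hglt
      have hterm := ihη _ hlt3 β hβ
      have hdeq : mdeg β + mdeg (δ + g) = mdeg α + mdeg η := by
        rw [mdeg_add]
        omega
      rwa [hdeq] at hterm
    clear hprod hhp hpq
    induction hp using Submodule.span_induction with
    | mem x hx => exact hgen x hx
    | zero => rw [mul_zero]; exact Submodule.zero_mem _
    | add x y hx hy ihx ihy => rw [mul_add]; exact Submodule.add_mem _ ihx ihy
    | smul c x hx ihx => rw [mul_smul_comm]; exact Submodule.smul_mem _ _ ihx

end AuxMaster
end MarkedFamilies
end
noncomputable section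
namespace MarkedFamilies
open MvPolynomial
section AuxFinal
variable {n : ℕ} {A : Type*} [CommRing A] {J : Set (Mon n)}
  {F : Mon n → MvPolynomial (Fin (n + 1)) A}

lemma span_FSetLe_le (s : ℕ) (ε : Mon n) :
    Submodule.span A (FSetLe J F s ε) ≤ Submodule.restrictScalars A (markedIdeal J F) := by
  rw [Submodule.span_le]
  rintro p ⟨β, g, hβ, _, _, _, rfl⟩
  exact Ideal.mul_mem_left _ _ (F_mem_markedIdeal hβ)

lemma mdeg_sub_of_le {v d : Mon n} (h : v ≤ d) : mdeg d = mdeg (d - v) + mdeg v := by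
  have hsum : d = (d - v) + v := by
    ext r
    have := Finsupp.le_def.1 h r
    simp only [apply_add, apply_sub]
    omega
  conv_lhs => rw [hsum]
  rw [mdeg_add]

lemma homogComp_monomial_mul (v : Mon n) (c : A) (x : MvPolynomial (Fin (n + 1)) A)
    (t : ℕ) (h : mdeg v ≤ t) :
    homogeneousComponent t (monomial v c * x)
      = monomial v c * homogeneousComponent (t - mdeg v) x := by
  classical
  apply MvPolynomial.ext
  intro d
  rw [coeff_homogeneousComponent, coeff_monomial_mul', coeff_monomial_mul']
  by_cases hvd : v ≤ d
  · rw [if_pos hvd, if_pos hvd, coeff_homogeneousComponent]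
    have hdd : Finsupp.degree d = mdeg (d - v) + mdeg v := mdeg_sub_of_le hvd
    have hbr : Finsupp.degree (d - v : Mon n) = mdeg (d - v) := rfl
    by_cases hdt : Finsupp.degree d = t
    · rw [if_pos hdt, if_pos (by omega)]
    · rw [if_neg hdt, if_neg (by omega), mul_zero]
  · rw [if_neg hvd, if_neg hvd, ite_self]

lemma homogComp_monomial_mul_zero (v : Mon n) (c : A) (x : MvPolynomial (Fin (n + 1)) A)
    (t : ℕ) (h : t < mdeg v) :
    homogeneousComponent t (monomial v c * x) = 0 := by
  classical
  apply MvPolynomial.ext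
  intro d
  rw [coeff_homogeneousComponent, coeff_zero]
  by_cases hdt : Finsupp.degree d = t
  · rw [if_pos hdt, coeff_monomial_mul']
    by_cases hvd : v ≤ d
    · exfalso
      have hdd : Finsupp.degree d = mdeg (d - v) + mdeg v := mdeg_sub_of_le hvd
      omega
    · rw [if_neg hvd]
  · rw [if_neg hdt]

lemma nSpan_homogComp {g : MvPolynomial (Fin (n + 1)) A} (hg : g ∈ nSpan A J) (t : ℕ) :
    homogeneousComponent t g ∈ nSpan A J := by
  rw [mem_nSpan_iff] at hg ⊢
  intro γ hγ
  rw [coeff_homogeneousComponent]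
  split_ifs
  · exact hg γ hγ
  · rfl

/-- Under the hypothesis (c) in low degrees, homogeneous components of ideal elements
are in the span of `F^(s)`. -/
lemma component_span (hJ : IsStronglyStable J) (hF : IsMarkedSet J F) (m : ℕ)
    (hm : ∀ α ∈ minGens J, mdeg α ≤ m)
    (h3 : ∀ s : ℕ, s ≤ m + 1 →
      (Submodule.restrictScalars A (markedIdeal J F) ⊓ nSpan A J)
        ⊓ homogeneousSubmodule (Fin (n + 1)) A s = ⊥) :
    ∀ g ∈ markedIdeal J F, ∀ t : ℕ,
      homogeneousComponent t g ∈ Submodule.span A (FSet J F t) := by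
  intro g hg
  induction hg using Submodule.span_induction with
  | mem x hx =>
    obtain ⟨α, hα, rfl⟩ := hx
    intro t
    have hmem : F α ∈ homogeneousSubmodule (Fin (n + 1)) A (mdeg α) := F_homog hF hα
    rw [homogeneousComponent_of_mem hmem]
    split_ifs with ht
    · subst ht
      refine Submodule.subset_span ⟨α, 0, hα, ?_, minGeMax_zero _, ?_⟩
      · simp [mdeg]
      · rw [show (monomial (0 : Mon n) (1 : A)) = 1 by simp, one_mul]
    · exact Submodule.zero_mem _
  | zero => intro t; rw [map_zero]; exact Submodule.zero_mem _
  | add x y hx hy ihx ihy => intro t; rw [map_add]; exact Submodule.add_mem _ (ihx t) (ihy t)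
  | smul c x hx ihx =>
    intro t
    rw [smul_eq_mul, c.as_sum, Finset.sum_mul, map_sum]
    apply Submodule.sum_mem
    intro v _
    by_cases hvt : mdeg v ≤ t
    · rw [homogComp_monomial_mul v _ x t hvt]
      have hms : (monomial v (c.coeff v) : MvPolynomial (Fin (n + 1)) A)
          * homogeneousComponent (t - mdeg v) x
          = c.coeff v • (monomial v 1 * homogeneousComponent (t - mdeg v) x) := by
        rw [show (monomial v (c.coeff v) : MvPolynomial (Fin (n + 1)) A)
            = c.coeff v • monomial v 1 by rw [MvPolynomial.smul_monomial, smul_eq_mul, mul_one],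
          smul_mul_assoc]
      rw [hms]
      apply Submodule.smul_mem
      have hcomp := ihx (t - mdeg v)
      have hgen : ∀ y, y ∈ Submodule.span A (FSet J F (t - mdeg v)) →
          monomial v (1 : A) * y ∈ Submodule.span A (FSet J F t) := by
        intro y hy
        induction hy using Submodule.span_induction with
        | mem z hz =>
          obtain ⟨β, g', hβ, hdeg', hmm', rfl⟩ := hz
          rw [← mul_assoc, monomial_mul, one_mul]
          have hma := master hJ hF m hm h3 (v + g') β hβ
          have hdeq : mdeg β + mdeg (v + g') = t := by
            rw [mdeg_add]
            omega
          rwa [hdeq] at hma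
        | zero => rw [mul_zero]; exact Submodule.zero_mem _
        | add a b ha hb iha ihb => rw [mul_add]; exact Submodule.add_mem _ iha ihb
        | smul r a ha iha => rw [mul_smul_comm]; exact Submodule.smul_mem _ _ iha
      exact hgen _ hcomp
    · rw [homogComp_monomial_mul_zero v _ x t (by omega)]
      exact Submodule.zero_mem _

/-- Codisjointness `(F_J) + ⟨N(J)⟩ = A[x]` holds unconditionally. -/
lemma codisjoint_IN (hJ : IsStronglyStable J) (hF : IsMarkedSet J F) :
    Submodule.restrictScalars A (markedIdeal J F) ⊔ nSpan A J = ⊤ := by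
  rw [eq_top_iff]
  intro p _
  rw [p.as_sum]
  apply Submodule.sum_mem
  intro v _
  rw [show (monomial v (p.coeff v) : MvPolynomial (Fin (n + 1)) A)
      = p.coeff v • monomial v 1 by rw [MvPolynomial.smul_monomial, smul_eq_mul, mul_one]]
  apply Submodule.smul_mem
  by_cases hvJ : v ∈ J
  · obtain ⟨a, d, hek⟩ := exists_ekp hJ v hvJ
    have hlc := lemC hJ hF d a v hek
    exact SetLike.le_def.1 (sup_le_sup (span_FSetLe_le _ _) (nSpanDeg_le_nSpan _)) hlc
  · exact Submodule.mem_sup_right (Submodule.subset_span ⟨v, hvJ, rfl⟩)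

end AuxFinal
end MarkedFamilies
end
open MvPolynomial MarkedFamilies in
/-- the marked basis property can be checked in degrees `s ≤ m + 1`,
where `m` is the maximal degree of a minimal generator of `J`. -/
theorem stmt_8 {n : ℕ} {A : Type*} [CommRing A] [IsNoetherianRing A]
    (J : Set (Mon n)) (hJ : IsStronglyStable J)
    (m : ℕ) (hm : ∀ α ∈ minGens J, mdeg α ≤ m) (hm' : ∃ α ∈ minGens J, mdeg α = m)
    (F : Mon n → MvPolynomial (Fin (n + 1)) A) (hF : IsMarkedSet J F) :
    List.TFAE
      [IsMarkedBasis J F,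
       ∀ s : ℕ, s ≤ m + 1 →
         idealDeg A (markedIdeal J F) s = Submodule.span A (FSet J F s),
       ∀ s : ℕ, s ≤ m + 1 →
         (Submodule.restrictScalars A (markedIdeal J F) ⊓ nSpan A J)
           ⊓ homogeneousSubmodule (Fin (n + 1)) A s = ⊥] := by
  tfae_have 1 → 2 := by
    intro h1 s _
    apply le_antisymm
    · intro g hg
      obtain ⟨hgI, hgH⟩ := Submodule.mem_inf.1 hg
      have hdec : g ∈ Submodule.span A (FSet J F s) ⊔ nSpanDeg A J s :=
        homog_decomp hJ hF ((mem_homogeneousSubmodule _ _).1 hgH)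
      obtain ⟨p, hp, q, hq, hpq⟩ := Submodule.mem_sup.1 hdec
      have hq0 : q = 0 := by
        have hqN : q ∈ nSpan A J := nSpanDeg_le_nSpan _ hq
        have hqI : q ∈ Submodule.restrictScalars A (markedIdeal J F) := by
          have hqe : q = g - p := by rw [← hpq]; ring
          rw [hqe]
          exact Submodule.sub_mem _ hgI (span_FSet_le s hp)
        exact (Submodule.disjoint_def.1 h1.2.disjoint) q hqI hqN
      rw [← hpq, hq0, add_zero]
      exact hp
    · refine le_inf (span_FSet_le s) ?_
      rw [Submodule.span_le]
      rintro x ⟨α, δ, hα, hdeg, hmm, rfl⟩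
      rw [SetLike.mem_coe, mem_homogeneousSubmodule]
      have hhom := (isHomogeneous_monomial (1 : A)
        (show (δ : Mon n).degree = mdeg δ from rfl)).mul (F_homog hF hα)
      have hE : mdeg δ + mdeg α = s := by omega
      rwa [hE] at hhom
  tfae_have 2 → 3 := by
    intro h2 s hs
    rw [eq_bot_iff]
    intro q hq
    obtain ⟨hq1, hqH⟩ := Submodule.mem_inf.1 hq
    obtain ⟨hqI, hqN⟩ := Submodule.mem_inf.1 hq1
    have hq2 : q ∈ idealDeg A (markedIdeal J F) s := Submodule.mem_inf.2 ⟨hqI, hqH⟩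
    rw [h2 s hs] at hq2
    rw [Submodule.mem_bot]
    exact lemB hJ hF hq2 hqN
  tfae_have 3 → 1 := by
    intro h3
    refine ⟨hF, ?_⟩
    rw [isCompl_iff]
    constructor
    · rw [Submodule.disjoint_def]
      intro g hgI hgN
      have hcomp : ∀ t, homogeneousComponent t g = 0 := by
        intro t
        have hc1 : homogeneousComponent t g ∈ Submodule.span A (FSet J F t) :=
          component_span hJ hF m hm h3 g hgI t
        have hc2 : homogeneousComponent t g ∈ nSpan A J := nSpan_homogComp hgN t
        exact lemB hJ hF hc1 hc2
      rw [← g.sum_homogeneousComponent]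
      exact Finset.sum_eq_zero fun t _ => hcomp t
    · rw [codisjoint_iff]
      exact codisjoint_IN hJ hF
  tfae_finish
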